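/- Let 0 ≤ α < ω₁ and let f : X → Y and g : X → Z have σ-sfd bases consisting of functionally ambiguous sets of class α. Then the mapping h : X → Y × Z, h(x) = (f(x), g(x)), has a σ-sfd base consisting of functionally ambiguous sets of class α. (In particular, the families of pairwise intersections of members of the two bases form such a base for h.) -/

import Mathlib

open Set Topology Ordinal

/-- A family of sets is discrete if every point has an open neighborhood
meeting at most one member of the family. -/
def DiscreteFam {X I : Type*} [TopologicalSpace X] (U : I → Set X) : Prop :=
  ∀ x : X, ∃ V : Set X, IsOpen V ∧ x ∈ V ∧
    ∀ i j : I, (V ∩ U i).Nonempty → (V ∩ U j).Nonempty → i = j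

/-- A set is functionally closed (a zero set) if it is the preimage of `{0}`
under a continuous real-valued function. -/
def FunClosed {X : Type*} [TopologicalSpace X] (F : Set X) : Prop :=
  ∃ f : X → ℝ, Continuous f ∧ F = f ⁻¹' {0}

/-- A set is functionally open if its complement is functionally closed. -/
def FunOpen {X : Type*} [TopologicalSpace X] (U : Set X) : Prop :=
  FunClosed Uᶜ

/-- The pair (α'th functionally multiplicative class, α'th functionally additive class),
defined by transfinite recursion. -/
noncomputable def FunClassPair (X : Type*) [TopologicalSpace X] (α : Ordinal) :
    Set (Set X) × Set (Set X) :=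
  if α = 0 then ({F | FunClosed F}, {U | FunOpen U})
  else
    ({ A | ∃ f : ℕ → Set X, (∀ n, ∃ β, ∃ _ : β < α, f n ∈ (FunClassPair X β).2) ∧ A = ⋂ n, f n },
     { A | ∃ f : ℕ → Set X, (∀ n, ∃ β, ∃ _ : β < α, f n ∈ (FunClassPair X β).1) ∧ A = ⋃ n, f n })
termination_by α

/-- The α'th functionally multiplicative class. -/
noncomputable def FunMul (X : Type*) [TopologicalSpace X] (α : Ordinal) : Set (Set X) :=
  (FunClassPair X α).1

/-- The α'th functionally additive class. -/
noncomputable def FunAdd (X : Type*) [TopologicalSpace X] (α : Ordinal) : Set (Set X) :=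
  (FunClassPair X α).2

/-- Functionally ambiguous sets of class α. -/
noncomputable def FunAmb {X : Type*} [TopologicalSpace X] (α : Ordinal) (A : Set X) : Prop :=
  A ∈ FunAdd X α ∧ A ∈ FunMul X α

/-- A family is strongly functionally discrete (sfd). -/
def SFDFam {X I : Type*} [TopologicalSpace X] (A : I → Set X) : Prop :=
  ∃ U : I → Set X, DiscreteFam U ∧ (∀ i, FunOpen (U i)) ∧ ∀ i, closure (A i) ⊆ U i

/-- A collection of sets is sfd (viewed as a family indexed by itself). -/
def SFDSet {X : Type*} [TopologicalSpace X] (𝒜 : Set (Set X)) : Prop :=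
  SFDFam (fun b : 𝒜 => (b : Set X))

/-- A collection of sets is a well sfd-family. -/
def WellSFDSet {X : Type*} [TopologicalSpace X] (𝒜 : Set (Set X)) : Prop :=
  ∃ U F : 𝒜 → Set X, DiscreteFam U ∧ DiscreteFam F ∧
    (∀ b, FunOpen (U b)) ∧ (∀ b, FunClosed (F b)) ∧
    ∀ b : 𝒜, (b : Set X) ⊆ F b ∧ F b ⊆ U b

/-- An indexed family is σ-sfd if the index set splits into countably many pieces
on each of which the family is sfd. -/
def SigmaSFDFam {X I : Type*} [TopologicalSpace X] (A : I → Set X) : Prop :=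
  ∃ J : ℕ → Set I, (∀ n, SFDFam (fun i : J n => A i)) ∧ (⋃ n, J n) = Set.univ

/-- `B` is a base for the mapping `f`: every preimage of an open set is a union
of members of `B`. -/
def IsBaseFor {X Y : Type*} [TopologicalSpace X] [TopologicalSpace Y]
    (B : Set (Set X)) (f : X → Y) : Prop :=
  ∀ V : Set Y, IsOpen V → ∃ S ⊆ B, f ⁻¹' V = ⋃₀ S

/-- `f` has a σ-strongly-functionally-discrete base. -/
def SigmaSFD {X Y : Type*} [TopologicalSpace X] [TopologicalSpace Y] (f : X → Y) : Prop :=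
  ∃ B : ℕ → Set (Set X), (∀ n, SFDSet (B n)) ∧ IsBaseFor (⋃ n, B n) f

/-- `f` has a σ-sfd base consisting of functionally ambiguous sets of class α. -/
noncomputable def SigmaSFDAmb {X Y : Type*} [TopologicalSpace X] [TopologicalSpace Y]
    (α : Ordinal) (f : X → Y) : Prop :=
  ∃ B : ℕ → Set (Set X), (∀ n, SFDSet (B n)) ∧ (∀ n, ∀ b ∈ B n, FunAmb α b) ∧
    IsBaseFor (⋃ n, B n) f

/-- `f` belongs to the α'th functionally Lebesgue class. -/
noncomputable def LebClass {X Y : Type*} [TopologicalSpace X] [TopologicalSpace Y]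
    (α : Ordinal) (f : X → Y) : Prop :=
  ∀ V : Set Y, IsOpen V → f ⁻¹' V ∈ FunAdd X α

/-- `Y` has a σ-disjoint base. -/
def SigmaDisjointBase (Y : Type*) [TopologicalSpace Y] : Prop :=
  ∃ V : ℕ → Set (Set Y), (∀ m, (V m).PairwiseDisjoint id) ∧
    TopologicalSpace.IsTopologicalBasis (⋃ m, V m)

section Aux

variable {X : Type*} [TopologicalSpace X]

lemma funClosed_inter' {A B : Set X} (hA : FunClosed A) (hB : FunClosed B) :
    FunClosed (A ∩ B) := by
  obtain ⟨f, hf, rfl⟩ := hA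
  obtain ⟨g, hg, rfl⟩ := hB
  refine ⟨fun x => |f x| + |g x|, by continuity, ?_⟩
  ext x
  simp only [mem_inter_iff, mem_preimage, mem_singleton_iff]
  constructor
  · rintro ⟨h1, h2⟩; simp [h1, h2]
  · intro h
    constructor <;> [skip; skip] <;>
      [have := abs_eq_zero.1 (le_antisymm (by nlinarith [abs_nonneg (g x)]) (abs_nonneg (f x)));
       have := abs_eq_zero.1 (le_antisymm (by nlinarith [abs_nonneg (f x)]) (abs_nonneg (g x)))] <;>
      exact this

lemma funClosed_union' {A B : Set X} (hA : FunClosed A) (hB : FunClosed B) :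
    FunClosed (A ∪ B) := by
  obtain ⟨f, hf, rfl⟩ := hA
  obtain ⟨g, hg, rfl⟩ := hB
  refine ⟨fun x => f x * g x, by continuity, ?_⟩
  ext x; simp [mul_eq_zero]

lemma funOpen_inter' {A B : Set X} (hA : FunOpen A) (hB : FunOpen B) :
    FunOpen (A ∩ B) := by
  show FunClosed (A ∩ B)ᶜ
  rw [compl_inter]
  exact funClosed_union' hA hB

lemma funClosed_iInter_funOpen {A : Set X} (hA : FunClosed A) :
    ∃ U : ℕ → Set X, (∀ n, FunOpen (U n)) ∧ A = ⋂ n, U n := by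
  obtain ⟨f, hf, rfl⟩ := hA
  refine ⟨fun n => {x | |f x| < 1 / (n + 1)}, fun n => ?_, ?_⟩
  · refine ⟨fun x => max (1 / (n + 1) - |f x|) 0, by continuity, ?_⟩
    ext x
    simp only [mem_compl_iff, mem_setOf_eq, not_lt, mem_preimage, mem_singleton_iff]
    rw [max_eq_right_iff, sub_nonpos]
  · ext x
    simp only [mem_preimage, mem_singleton_iff, mem_iInter, mem_setOf_eq]
    constructor
    · intro h n; rw [h]; simp; positivity
    · intro h
      by_contra hne
      obtain ⟨n, hn⟩ := exists_nat_one_div_lt (abs_pos.2 hne)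
      exact absurd (h n) (not_lt.2 (by exact_mod_cast hn.le))

lemma funOpen_iUnion_funClosed {A : Set X} (hA : FunOpen A) :
    ∃ F : ℕ → Set X, (∀ n, FunClosed (F n)) ∧ A = ⋃ n, F n := by
  obtain ⟨U, hU, hEq⟩ := funClosed_iInter_funOpen hA
  refine ⟨fun n => (U n)ᶜ, fun n => hU n, ?_⟩
  rw [← compl_compl A, hEq, compl_iInter]

lemma funMul_zero : FunMul X 0 = {F | FunClosed F} := by
  rw [FunMul, FunClassPair]; simp

lemma funAdd_zero : FunAdd X 0 = {U | FunOpen U} := by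
  rw [FunAdd, FunClassPair]; simp

lemma funMul_ne_zero {α : Ordinal} (h : α ≠ 0) :
    FunMul X α = { A | ∃ f : ℕ → Set X,
      (∀ n, ∃ β, ∃ _ : β < α, f n ∈ FunAdd X β) ∧ A = ⋂ n, f n } := by
  rw [FunMul, FunClassPair, if_neg h]; rfl

lemma funAdd_ne_zero {α : Ordinal} (h : α ≠ 0) :
    FunAdd X α = { A | ∃ f : ℕ → Set X,
      (∀ n, ∃ β, ∃ _ : β < α, f n ∈ FunMul X β) ∧ A = ⋃ n, f n } := by
  rw [FunAdd, FunClassPair, if_neg h]; rfl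

lemma funMul_mono {β γ : Ordinal} (h : β ≤ γ) : FunMul X β ⊆ FunMul X γ := by
  rcases h.lt_or_eq with h | rfl
  · have hγ : γ ≠ 0 := fun hh => absurd h (by simp [hh, not_lt_zero])
    rw [funMul_ne_zero hγ]
    intro A hA
    rcases eq_or_ne β 0 with rfl | hβ
    · rw [funMul_zero] at hA
      obtain ⟨U, hU, hEq⟩ := funClosed_iInter_funOpen hA
      exact ⟨U, fun n => ⟨0, h, by rw [funAdd_zero]; exact hU n⟩, hEq⟩
    · rw [funMul_ne_zero hβ] at hA
      obtain ⟨u, hu, rfl⟩ := hA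
      refine ⟨u, fun n => ?_, rfl⟩
      obtain ⟨δ, hδ, hm⟩ := hu n
      exact ⟨δ, hδ.trans h, hm⟩
  · exact subset_rfl

lemma funAdd_mono {β γ : Ordinal} (h : β ≤ γ) : FunAdd X β ⊆ FunAdd X γ := by
  rcases h.lt_or_eq with h | rfl
  · have hγ : γ ≠ 0 := fun hh => absurd h (by simp [hh, not_lt_zero])
    rw [funAdd_ne_zero hγ]
    intro A hA
    rcases eq_or_ne β 0 with rfl | hβ
    · rw [funAdd_zero] at hA
      obtain ⟨F, hF, hEq⟩ := funOpen_iUnion_funClosed hA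
      exact ⟨F, fun n => ⟨0, h, by rw [funMul_zero]; exact hF n⟩, hEq⟩
    · rw [funAdd_ne_zero hβ] at hA
      obtain ⟨u, hu, rfl⟩ := hA
      refine ⟨u, fun n => ?_, rfl⟩
      obtain ⟨δ, hδ, hm⟩ := hu n
      exact ⟨δ, hδ.trans h, hm⟩
  · exact subset_rfl

private noncomputable def natPairEquiv : ℕ ≃ ℕ × ℕ := (Denumerable.eqv (ℕ × ℕ)).symm

lemma iInter_pair_eq (u v : ℕ → Set X) :
    (⋂ k, u (natPairEquiv k).1 ∩ v (natPairEquiv k).2) = (⋂ n, u n) ∩ ⋂ m, v m := by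
  ext x
  simp only [mem_iInter, mem_inter_iff]
  constructor
  · intro h
    refine ⟨fun n => ?_, fun m => ?_⟩
    · have := (h (natPairEquiv.symm (n, 0))).1
      simpa using this
    · have := (h (natPairEquiv.symm (0, m))).2
      simpa using this
  · rintro ⟨h1, h2⟩ k
    exact ⟨h1 _, h2 _⟩

lemma iUnion_pair_eq (u v : ℕ → Set X) :
    (⋃ k, u (natPairEquiv k).1 ∩ v (natPairEquiv k).2) = (⋃ n, u n) ∩ ⋃ m, v m := by
  ext x
  simp only [mem_iUnion, mem_inter_iff]
  constructor
  · rintro ⟨k, h1, h2⟩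
    exact ⟨⟨_, h1⟩, ⟨_, h2⟩⟩
  · rintro ⟨⟨n, hn⟩, ⟨m, hm⟩⟩
    refine ⟨natPairEquiv.symm (n, m), ?_, ?_⟩ <;> simpa

lemma funClasses_inter_closed : ∀ α : Ordinal,
    (∀ A B : Set X, A ∈ FunMul X α → B ∈ FunMul X α → A ∩ B ∈ FunMul X α) ∧
    (∀ A B : Set X, A ∈ FunAdd X α → B ∈ FunAdd X α → A ∩ B ∈ FunAdd X α) := by
  intro α
  induction α using Ordinal.induction with
  | h α IH =>
    rcases eq_or_ne α 0 with rfl | hα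
    · rw [funMul_zero, funAdd_zero]
      exact ⟨fun A B hA hB => funClosed_inter' hA hB,
        fun A B hA hB => funOpen_inter' hA hB⟩
    · constructor
      · rw [funMul_ne_zero hα]
        rintro A B ⟨u, hu, rfl⟩ ⟨v, hv, rfl⟩
        refine ⟨fun k => u (natPairEquiv k).1 ∩ v (natPairEquiv k).2, fun k => ?_,
          (iInter_pair_eq u v).symm⟩
        obtain ⟨β₁, hβ₁, hm₁⟩ := hu (natPairEquiv k).1
        obtain ⟨β₂, hβ₂, hm₂⟩ := hv (natPairEquiv k).2
        refine ⟨max β₁ β₂, max_lt hβ₁ hβ₂, ?_⟩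
        exact (IH _ (max_lt hβ₁ hβ₂)).2 _ _
          (funAdd_mono (le_max_left _ _) hm₁) (funAdd_mono (le_max_right _ _) hm₂)
      · rw [funAdd_ne_zero hα]
        rintro A B ⟨u, hu, rfl⟩ ⟨v, hv, rfl⟩
        refine ⟨fun k => u (natPairEquiv k).1 ∩ v (natPairEquiv k).2, fun k => ?_,
          (iUnion_pair_eq u v).symm⟩
        obtain ⟨β₁, hβ₁, hm₁⟩ := hu (natPairEquiv k).1
        obtain ⟨β₂, hβ₂, hm₂⟩ := hv (natPairEquiv k).2
        refine ⟨max β₁ β₂, max_lt hβ₁ hβ₂, ?_⟩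
        exact (IH _ (max_lt hβ₁ hβ₂)).1 _ _
          (funMul_mono (le_max_left _ _) hm₁) (funMul_mono (le_max_right _ _) hm₂)

lemma funAmb_inter {α : Ordinal} {A B : Set X} (hA : FunAmb α A) (hB : FunAmb α B) :
    FunAmb α (A ∩ B) :=
  ⟨(funClasses_inter_closed α).2 A B hA.1 hB.1,
   (funClasses_inter_closed α).1 A B hA.2 hB.2⟩

lemma sfdSet_inter {𝒜 ℬ : Set (Set X)} (h𝒜 : SFDSet 𝒜) (hℬ : SFDSet ℬ) :
    SFDSet (Set.image2 (· ∩ ·) 𝒜 ℬ) := by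
  obtain ⟨U, hUd, hUo, hUc⟩ := h𝒜
  obtain ⟨V, hVd, hVo, hVc⟩ := hℬ
  have hsel : ∀ d : ↥(Set.image2 (· ∩ ·) 𝒜 ℬ),
      ∃ a : 𝒜, ∃ b : ℬ, (d : Set X) = ↑a ∩ ↑b := by
    rintro ⟨d, hd⟩
    obtain ⟨a, ha, b, hb, rfl⟩ := hd
    exact ⟨⟨a, ha⟩, ⟨b, hb⟩, rfl⟩
  choose p q hpq using hsel
  refine ⟨fun d => U (p d) ∩ V (q d), ?_, ?_, ?_⟩
  · intro x
    obtain ⟨N₁, hN₁o, hxN₁, h₁⟩ := hUd x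
    obtain ⟨N₂, hN₂o, hxN₂, h₂⟩ := hVd x
    refine ⟨N₁ ∩ N₂, hN₁o.inter hN₂o, ⟨hxN₁, hxN₂⟩, ?_⟩
    rintro i j ⟨y, hy⟩ ⟨z, hz⟩
    have hp : p i = p j := h₁ _ _ ⟨y, hy.1.1, hy.2.1⟩ ⟨z, hz.1.1, hz.2.1⟩
    have hq : q i = q j := h₂ _ _ ⟨y, hy.1.2, hy.2.2⟩ ⟨z, hz.1.2, hz.2.2⟩
    apply Subtype.ext
    rw [hpq i, hpq j, hp, hq]
  · intro d
    exact funOpen_inter' (hUo _) (hVo _)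
  · intro d
    show closure ((d : Set X)) ⊆ _
    rw [hpq d]
    calc closure (↑(p d) ∩ ↑(q d) : Set X)
        ⊆ closure ↑(p d) ∩ closure ↑(q d) :=
          subset_inter (closure_mono inter_subset_left) (closure_mono inter_subset_right)
      _ ⊆ U (p d) ∩ V (q d) := inter_subset_inter (hUc _) (hVc _)

end Aux

theorem stmt9 {X Y Z : Type*} [TopologicalSpace X] [TopologicalSpace Y] [TopologicalSpace Z]
    (α : Ordinal) (hα : α < ω₁)
    (f : X → Y) (g : X → Z) (hf : SigmaSFDAmb α f) (hg : SigmaSFDAmb α g) :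
    SigmaSFDAmb α (fun x => (f x, g x)) := by
  obtain ⟨B, hBsfd, hBamb, hBbase⟩ := hf
  obtain ⟨C, hCsfd, hCamb, hCbase⟩ := hg
  refine ⟨fun n => Set.image2 (· ∩ ·) (B (natPairEquiv n).1) (C (natPairEquiv n).2),
    fun n => sfdSet_inter (hBsfd _) (hCsfd _), ?_, ?_⟩
  · rintro n b ⟨a, ha, c, hc, rfl⟩
    exact funAmb_inter (hBamb _ _ ha) (hCamb _ _ hc)
  · intro O hO
    set h : X → Y × Z := fun x => (f x, g x) with hh
    refine ⟨{d | (d ∈ ⋃ n, Set.image2 (· ∩ ·) (B (natPairEquiv n).1)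
      (C (natPairEquiv n).2)) ∧ d ⊆ h ⁻¹' O}, fun d hd => hd.1, ?_⟩
    apply Subset.antisymm
    · intro x hx
      obtain ⟨V, W, hVo, hWo, hfx, hgx, hVW⟩ := isOpen_prod_iff.1 hO (f x) (g x) hx
      obtain ⟨S, hS, hSeq⟩ := hBbase V hVo
      obtain ⟨T, hT, hTeq⟩ := hCbase W hWo
      have hxS : x ∈ ⋃₀ S := by rw [← hSeq]; exact hfx
      have hxT : x ∈ ⋃₀ T := by rw [← hTeq]; exact hgx
      obtain ⟨b, hbS, hxb⟩ := hxS
      obtain ⟨c, hcT, hxc⟩ := hxT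
      obtain ⟨n₁, hbn⟩ := mem_iUnion.1 (hS hbS)
      obtain ⟨n₂, hcn⟩ := mem_iUnion.1 (hT hcT)
      refine ⟨b ∩ c, ⟨?_, ?_⟩, ⟨hxb, hxc⟩⟩
      · refine mem_iUnion.2 ⟨natPairEquiv.symm (n₁, n₂), ?_⟩
        exact ⟨b, by simpa, c, by simpa, rfl⟩
      · rintro z ⟨hzb, hzc⟩
        have hzV : z ∈ f ⁻¹' V := by
          rw [hSeq]; exact ⟨b, hbS, hzb⟩
        have hzW : z ∈ g ⁻¹' W := by
          rw [hTeq]; exact ⟨c, hcT, hzc⟩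
        exact hVW ⟨hzV, hzW⟩
    · exact sUnion_subset fun d hd => hd.2
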